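/- For every real number θ0 with 0 ≤ θ0 < π, the integral ∫_{θ0}^{π} √((1 − cos θ)/(cos θ0 − cos θ)) dθ equals π. In particular this value does not depend on θ0. -/

import Mathlib

open Real intervalIntegral

theorem tautochrone_integral (θ0 : ℝ) (h0 : 0 ≤ θ0) (h1 : θ0 < Real.pi) :
    ∫ θ in θ0..Real.pi,
      Real.sqrt ((1 - Real.cos θ) / (Real.cos θ0 - Real.cos θ)) = Real.pi := by
  rcases h0.eq_or_lt with rfl | hpos
  · -- θ0 = 0 : integrand is a.e. equal to 1
    have h : ∫ θ in (0:ℝ)..Real.pi,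
        Real.sqrt ((1 - Real.cos θ) / (Real.cos 0 - Real.cos θ)) =
        ∫ θ in (0:ℝ)..Real.pi, (1:ℝ) := by
      apply intervalIntegral.integral_congr_ae
      filter_upwards with θ hθ
      rw [Set.uIoc_of_le Real.pi_pos.le] at hθ
      have hlt : Real.cos θ < 1 := by
        have := Real.cos_lt_cos_of_nonneg_of_le_pi le_rfl hθ.2 hθ.1
        simpa using this
      rw [Real.cos_zero, div_self (by linarith), Real.sqrt_one]
    rw [h]; simp
  · -- main case 0 < θ0 < π
    set c := Real.cos (θ0 / 2) with hc_def
    have hc : 0 < c := Real.cos_pos_of_mem_Ioo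
      ⟨by nlinarith [Real.pi_pos], by linarith⟩
    set F : ℝ → ℝ := fun θ => 2 * Real.arccos (Real.cos (θ / 2) / c) with hF
    have hcontF : Continuous F := by
      apply continuous_const.mul
      exact Real.continuous_arccos.comp ((Real.continuous_cos.comp
        (continuous_id.div_const 2)).div_const c)
    -- derivative on the interior
    have hderiv : ∀ θ ∈ Set.Ioo θ0 Real.pi,
        HasDerivAt F (Real.sqrt ((1 - Real.cos θ) / (Real.cos θ0 - Real.cos θ))) θ := by
      intro θ hθ
      obtain ⟨hθl, hθr⟩ := hθ
      have hcθ : 0 < Real.cos (θ / 2) := Real.cos_pos_of_mem_Ioo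
        ⟨by nlinarith [Real.pi_pos], by linarith⟩
      have hlt : Real.cos (θ / 2) < c :=
        Real.cos_lt_cos_of_nonneg_of_le_pi (by linarith) (by linarith) (by linarith)
      set x := Real.cos (θ / 2) / c with hx_def
      have hx0 : 0 < x := div_pos hcθ hc
      have hx1 : x < 1 := (div_lt_one hc).2 hlt
      have hs : 0 < Real.sin (θ / 2) :=
        Real.sin_pos_of_pos_of_lt_pi (by linarith) (by linarith)
      have hinner : HasDerivAt (fun t => Real.cos (t / 2) / c)
          (-Real.sin (θ / 2) * (1 / 2) / c) θ := by
        have := (((hasDerivAt_id θ).div_const 2).cos).div_const c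
        simpa using this
      have harc : HasDerivAt (fun t => Real.arccos (Real.cos (t / 2) / c))
          (-(1 / Real.sqrt (1 - x ^ 2)) * (-Real.sin (θ / 2) * (1 / 2) / c)) θ :=
        by
          have ha := Real.hasDerivAt_arccos (x := x) (by linarith) (ne_of_lt hx1)
          exact HasDerivAt.comp (h₂ := Real.arccos) θ ha hinner
      have hD : 0 < c ^ 2 - Real.cos (θ / 2) ^ 2 := by nlinarith
      have hcosθ : Real.cos θ = 2 * Real.cos (θ / 2) ^ 2 - 1 := by
        conv_lhs => rw [show θ = 2 * (θ / 2) by ring, Real.cos_two_mul]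
      have hcosθ0 : Real.cos θ0 = 2 * c ^ 2 - 1 := by
        conv_lhs => rw [show θ0 = 2 * (θ0 / 2) by ring, Real.cos_two_mul]
      have hnum : 1 - Real.cos θ = 2 * Real.sin (θ / 2) ^ 2 := by
        rw [hcosθ, Real.sin_sq]; ring
      have hden : Real.cos θ0 - Real.cos θ = 2 * (c ^ 2 - Real.cos (θ / 2) ^ 2) := by
        rw [hcosθ, hcosθ0]; ring
      have hsqrtD : 0 < Real.sqrt (c ^ 2 - Real.cos (θ / 2) ^ 2) := Real.sqrt_pos.2 hD
      have hval : Real.sqrt ((1 - Real.cos θ) / (Real.cos θ0 - Real.cos θ)) =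
          Real.sin (θ / 2) / Real.sqrt (c ^ 2 - Real.cos (θ / 2) ^ 2) := by
        rw [hnum, hden,
          show (2 * Real.sin (θ / 2) ^ 2) / (2 * (c ^ 2 - Real.cos (θ / 2) ^ 2)) =
            Real.sin (θ / 2) ^ 2 / (c ^ 2 - Real.cos (θ / 2) ^ 2) by
            rw [mul_div_mul_left _ _ (two_ne_zero)]]
        rw [Real.sqrt_div (sq_nonneg _), Real.sqrt_sq hs.le]
      have hsqrt1x : c * Real.sqrt (1 - x ^ 2) =
          Real.sqrt (c ^ 2 - Real.cos (θ / 2) ^ 2) := by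
        have hcc : c * Real.sqrt (1 - x ^ 2) = Real.sqrt (c ^ 2 * (1 - x ^ 2)) := by
          rw [Real.sqrt_mul (sq_nonneg c), Real.sqrt_sq hc.le]
        rw [hcc]
        congr 1
        rw [hx_def]
        field_simp
      have h2 := harc.const_mul 2
      have h1x : 0 < Real.sqrt (1 - x ^ 2) := by
        rw [show Real.sqrt (1 - x ^ 2) = Real.sqrt (c ^ 2 - Real.cos (θ / 2) ^ 2) / c by
          rw [← hsqrt1x]; field_simp]
        positivity
      refine h2.congr_deriv (Eq.symm ?_)
      rw [hval, ← hsqrt1x]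
      field_simp
    -- integrability
    have hint : IntervalIntegrable
        (fun θ => Real.sqrt ((1 - Real.cos θ) / (Real.cos θ0 - Real.cos θ)))
        MeasureTheory.volume θ0 Real.pi := by
      set m := min (Real.sin θ0) c with hm_def
      have hm : 0 < m := lt_min (Real.sin_pos_of_pos_of_lt_pi hpos h1) hc
      have hg : IntervalIntegrable
          (fun θ => Real.sqrt (Real.pi / m) * (θ - θ0) ^ (-(1/2) : ℝ))
          MeasureTheory.volume θ0 Real.pi := by
        have h := (intervalIntegral.intervalIntegrable_rpow'
          (a := 0) (b := Real.pi - θ0) (r := (-(1/2) : ℝ)) (by norm_num)).comp_sub_right θ0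
        simpa using h.const_mul (Real.sqrt (Real.pi / m))
      apply hg.mono_fun'
      · apply Measurable.aestronglyMeasurable
        exact (((measurable_const.sub Real.measurable_cos).div
          (measurable_const.sub Real.measurable_cos))).sqrt
      · rw [Set.uIoc_of_le h1.le]
        refine (MeasureTheory.ae_restrict_iff' measurableSet_Ioc).2
          (Filter.Eventually.of_forall ?_)
        intro θ hθ
        obtain ⟨hθl, hθr⟩ := hθ
        have hθ0 : 0 < θ - θ0 := by linarith
        have hsin2 : (θ - θ0) / Real.pi ≤ Real.sin ((θ - θ0) / 2) := by
          have h := Real.mul_le_sin (x := (θ - θ0) / 2) (by linarith) (by linarith)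
          calc (θ - θ0) / Real.pi = 2 / Real.pi * ((θ - θ0) / 2) := by
                field_simp
            _ ≤ Real.sin ((θ - θ0) / 2) := h
        have hsin1 : m ≤ Real.sin ((θ0 + θ) / 2) := by
          rcases le_total ((θ0 + θ) / 2) (Real.pi / 2) with h | h
          · refine (min_le_left _ _).trans ?_
            exact Real.strictMonoOn_sin.monotoneOn ⟨by linarith, by linarith⟩
              ⟨by linarith, h⟩ (by linarith)
          · refine (min_le_right _ _).trans ?_
            have heq : Real.sin ((θ0 + θ) / 2) = Real.sin (Real.pi - (θ0 + θ) / 2) :=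
              (Real.sin_pi_sub _).symm
            have hcs : c = Real.sin (Real.pi / 2 - θ0 / 2) := by
              rw [Real.sin_pi_div_two_sub]
            rw [heq, hcs]
            exact Real.strictMonoOn_sin.monotoneOn
              ⟨by linarith, by linarith⟩ ⟨by linarith, by linarith⟩ (by linarith)
        have hden : 2 * m * ((θ - θ0) / Real.pi) ≤ Real.cos θ0 - Real.cos θ := by
          have hcc : Real.cos θ0 - Real.cos θ =
              2 * Real.sin ((θ0 + θ) / 2) * Real.sin ((θ - θ0) / 2) := by
            rw [Real.cos_sub_cos]
            rw [show (θ0 - θ) / 2 = -((θ - θ0) / 2) by ring, Real.sin_neg]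
            ring
          rw [hcc]
          have h1 : 0 ≤ (θ - θ0) / Real.pi := by positivity
          nlinarith [Real.pi_pos]
        have hdenpos : 0 < 2 * m * ((θ - θ0) / Real.pi) := by positivity
        have hnum2 : 1 - Real.cos θ ≤ 2 := by nlinarith [Real.neg_one_le_cos θ]
        have hdiv : (1 - Real.cos θ) / (Real.cos θ0 - Real.cos θ) ≤
            Real.pi / (m * (θ - θ0)) := by
          have h2 : (1 - Real.cos θ) / (Real.cos θ0 - Real.cos θ) ≤
              2 / (2 * m * ((θ - θ0) / Real.pi)) :=
            div_le_div₀ (by norm_num) hnum2 hdenpos hden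
          have h3 : 2 / (2 * m * ((θ - θ0) / Real.pi)) = Real.pi / (m * (θ - θ0)) := by
            rw [eq_div_iff (by positivity)]
            field_simp
          linarith [h2, h3.le]
        have hnn : 0 ≤ (1 - Real.cos θ) / (Real.cos θ0 - Real.cos θ) := by
          have hc1 : Real.cos θ ≤ 1 := Real.cos_le_one θ
          have hc2 : 0 < Real.cos θ0 - Real.cos θ := by
            have := Real.cos_lt_cos_of_nonneg_of_le_pi h0 hθr hθl
            linarith
          exact div_nonneg (by linarith) hc2.le
        have hgθ : Real.sqrt (Real.pi / m) * (θ - θ0) ^ (-(1/2) : ℝ) =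
            Real.sqrt (Real.pi / (m * (θ - θ0))) := by
          rw [Real.rpow_neg hθ0.le, ← Real.sqrt_eq_rpow, ← Real.sqrt_inv,
            ← Real.sqrt_mul (by positivity)]
          congr 1
          field_simp
        simp only [Real.norm_eq_abs]
        rw [abs_of_nonneg (Real.sqrt_nonneg _), hgθ]
        exact Real.sqrt_le_sqrt hdiv
    rw [intervalIntegral.integral_eq_sub_of_hasDeriv_right_of_le h1.le
      hcontF.continuousOn (fun x hx => (hderiv x hx).hasDerivWithinAt) hint]
    have hFpi : F Real.pi = Real.pi := by
      rw [hF]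
      simp only [Real.cos_pi_div_two, zero_div, Real.arccos_zero]
      ring
    have hFθ0 : F θ0 = 0 := by
      rw [hF]
      simp only [← hc_def, div_self hc.ne', Real.arccos_one, mul_zero]
    rw [hFpi, hFθ0, sub_zero]
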